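/- Let X be a real Banach space and H a C^∞ K-map on X all of whose iterated Fréchet derivatives are bounded on X. For ε > 0 set H_ε(x) = ε·H(x/ε). Let Y be a Banach space, j a nonnegative integer, and P_j a continuous homogeneous polynomial map of degree j from X to Y. Then for every n there is a constant c_{j,n} > 0, depending only on P_j, H and n (not on ε), such that sup_{x ∈ X} ‖D^n(P_j ∘ H_ε)(x)‖ ≤ ε^{j−n} · c_{j,n}. -/

import Mathlib

open Filter

/-- Let `H` be a `C^∞` K-map on `X` with all iterated Fréchet derivatives bounded, and for
`ε > 0` let `H_ε x = ε • H (x / ε)`.  For a continuous homogeneous polynomial `P_j` of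
degree `j` (given by a continuous symmetric `j`-linear map `g`), for every `n` there is a
constant `c > 0`, independent of `ε`, with
`‖D^n (P_j ∘ H_ε) x‖ ≤ ε ^ (j - n) * c` for all `x` and all `ε > 0`. -/
theorem derivative_estimate_rescaled
    {X : Type*} [NormedAddCommGroup X] [NormedSpace ℝ X] [CompleteSpace X]
    {Y : Type*} [NormedAddCommGroup Y] [NormedSpace ℝ Y] [CompleteSpace Y]
    (H : X → X) (hH : ContDiff ℝ (⊤ : ℕ∞) H)
    (hHid : ∀ᶠ x in nhds (0 : X), H x = x)
    (hHbdd : ∃ C : ℝ, ∀ x, ‖H x‖ ≤ C)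
    (hHder : ∀ n : ℕ, ∃ C : ℝ, ∀ x, ‖iteratedFDeriv ℝ n H x‖ ≤ C)
    (j : ℕ) (g : ContinuousMultilinearMap ℝ (fun _ : Fin j => X) Y)
    (hsym : ∀ (v : Fin j → X) (σ : Equiv.Perm (Fin j)), g (v ∘ σ) = g v)
    (P : X → Y) (hP : ∀ x, P x = g (fun _ => x)) :
    ∀ n : ℕ, ∃ c : ℝ, 0 < c ∧ ∀ ε : ℝ, 0 < ε → ∀ x : X,
      ‖iteratedFDeriv ℝ n (fun y => P (ε • H (ε⁻¹ • y))) x‖ ≤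
        ε ^ ((j : ℤ) - (n : ℤ)) * c := by
  intro n
  classical
  -- the diagonal map
  set Δ : X →L[ℝ] (Fin j → X) := ContinuousLinearMap.pi (fun _ => ContinuousLinearMap.id ℝ X)
    with hΔdef
  have hΔnorm : ‖Δ‖ ≤ 1 := by
    refine ContinuousLinearMap.opNorm_le_bound _ zero_le_one (fun x => ?_)
    rw [one_mul]
    refine (pi_norm_le_iff_of_nonneg (norm_nonneg x)).2 (fun i => le_refl _)
  have hPfun : P = (⇑g) ∘ Δ := by
    funext x
    simp [hP, Δ, Function.comp]
  have hPdiff : ContDiff ℝ (⊤ : ℕ∞) P := by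
    rw [hPfun]
    exact g.contDiff.comp Δ.contDiff
  -- bound on H
  obtain ⟨R₀, hR₀⟩ := hHbdd
  set R : ℝ := max R₀ 1 with hRdef
  have hR1 : (1 : ℝ) ≤ R := le_max_right _ _
  have hHR : ∀ x, ‖H x‖ ≤ R := fun x => (hR₀ x).trans (le_max_left _ _)
  -- bound on derivatives of P at points of norm ≤ R
  set C : ℝ := (j.factorial : ℝ) * (‖g‖ + 1) * R ^ j with hCdef
  have hCpos : 0 < C := by
    have : (0:ℝ) < (j.factorial : ℝ) := by positivity
    have h1 : (0:ℝ) < ‖g‖ + 1 := by positivity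
    have h2 : (0:ℝ) < R ^ j := by positivity
    positivity
  have hPder : ∀ (z : X), ‖z‖ ≤ R → ∀ i, i ≤ n → ‖iteratedFDeriv ℝ i P z‖ ≤ C := by
    intro z hz i _
    have h1 : iteratedFDeriv ℝ i P z =
        (iteratedFDeriv ℝ i (⇑g) (Δ z)).compContinuousLinearMap fun _ => Δ := by
      rw [hPfun]
      exact Δ.iteratedFDeriv_comp_right (g.contDiff (n := (⊤ : ℕ∞))) z (by exact_mod_cast le_top)
    rw [h1]
    calc ‖(iteratedFDeriv ℝ i (⇑g) (Δ z)).compContinuousLinearMap fun _ => Δ‖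
        ≤ ‖iteratedFDeriv ℝ i (⇑g) (Δ z)‖ * ∏ _k : Fin i, ‖Δ‖ :=
          ContinuousMultilinearMap.norm_compContinuousLinearMap_le _ _
      _ ≤ ‖iteratedFDeriv ℝ i (⇑g) (Δ z)‖ * 1 := by
          refine mul_le_mul_of_nonneg_left ?_ (norm_nonneg _)
          calc (∏ _k : Fin i, ‖Δ‖) ≤ ∏ _k : Fin i, (1:ℝ) :=
                Finset.prod_le_prod (fun _ _ => norm_nonneg _) (fun _ _ => hΔnorm)
            _ = 1 := by simp
      _ = ‖iteratedFDeriv ℝ i (⇑g) (Δ z)‖ := mul_one _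
      _ ≤ (Fintype.card (Fin j)).descFactorial i * ‖g‖ * ‖Δ z‖ ^ (Fintype.card (Fin j) - i) :=
          g.norm_iteratedFDeriv_le i (Δ z)
      _ ≤ C := by
          simp only [Fintype.card_fin]
          have hΔz : ‖Δ z‖ ≤ R := by
            refine (pi_norm_le_iff_of_nonneg (le_trans (norm_nonneg z) hz)).2 ?_
            intro i; simpa [Δ] using hz
          have h2 : ‖Δ z‖ ^ (j - i) ≤ R ^ j := by
            calc ‖Δ z‖ ^ (j - i) ≤ R ^ (j - i) :=
                  pow_le_pow_left₀ (norm_nonneg _) hΔz _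
              _ ≤ R ^ j := pow_le_pow_right₀ hR1 (Nat.sub_le _ _)
          have h3 : ((j.descFactorial i : ℕ) : ℝ) ≤ (j.factorial : ℝ) := by
            have : j.descFactorial i ≤ j.factorial := by
              rcases le_or_gt i j with hij | hij
              · calc j.descFactorial i ≤ (j - i).factorial * j.descFactorial i :=
                    Nat.le_mul_of_pos_left _ (Nat.factorial_pos _)
                  _ = j.factorial := Nat.factorial_mul_descFactorial hij
              · simp [Nat.descFactorial_eq_zero_iff_lt.2 hij]
            exact_mod_cast this
          calc (j.descFactorial i : ℝ) * ‖g‖ * ‖Δ z‖ ^ (j - i)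
              ≤ (j.factorial : ℝ) * (‖g‖ + 1) * (R ^ j) := by
                apply mul_le_mul
                · apply mul_le_mul h3 (by linarith [norm_nonneg g]) (norm_nonneg g)
                    (by positivity)
                · exact h2
                · positivity
                · positivity
            _ = C := rfl
  -- bound on derivatives of H
  have hDex : ∃ D : ℝ, 1 ≤ D ∧ ∀ i, 1 ≤ i → i ≤ n → ∀ x, ‖iteratedFDeriv ℝ i H x‖ ≤ D ^ i := by
    choose CH hCH using hHder
    refine ⟨1 + ∑ i ∈ Finset.range (n + 1), max (CH i) 0, ?_, ?_⟩
    · have : (0:ℝ) ≤ ∑ i ∈ Finset.range (n + 1), max (CH i) 0 :=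
        Finset.sum_nonneg (fun i _ => le_max_right _ _)
      linarith
    · intro i hi1 hin x
      set D := 1 + ∑ k ∈ Finset.range (n + 1), max (CH k) 0 with hDdef
      have hD1 : (1:ℝ) ≤ D := by
        have : (0:ℝ) ≤ ∑ k ∈ Finset.range (n + 1), max (CH k) 0 :=
          Finset.sum_nonneg (fun k _ => le_max_right _ _)
        simp only [hDdef]; linarith
      have hDi : ‖iteratedFDeriv ℝ i H x‖ ≤ D := by
        have hmem : i ∈ Finset.range (n + 1) := Finset.mem_range.2 (Nat.lt_succ_of_le hin)
        have h1 : max (CH i) 0 ≤ ∑ k ∈ Finset.range (n + 1), max (CH k) 0 :=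
          Finset.single_le_sum (f := fun k => max (CH k) 0) (fun k _ => le_max_right _ _) hmem
        have h2 : ‖iteratedFDeriv ℝ i H x‖ ≤ max (CH i) 0 :=
          (hCH i x).trans (le_max_left _ _)
        simp only [hDdef]; linarith
      calc ‖iteratedFDeriv ℝ i H x‖ ≤ D := hDi
        _ = D ^ 1 := (pow_one D).symm
        _ ≤ D ^ i := pow_le_pow_right₀ hD1 hi1
  obtain ⟨D, hD1, hDder⟩ := hDex
  -- the composition P ∘ H with its uniform bound
  set c : ℝ := (n.factorial : ℝ) * C * D ^ n with hcdef
  have hcpos : 0 < c := by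
    have : (0:ℝ) < D ^ n := by positivity
    positivity
  have hFdiff : ContDiff ℝ (⊤ : ℕ∞) (P ∘ H) := hPdiff.comp hH
  have hFbound : ∀ x, ‖iteratedFDeriv ℝ n (P ∘ H) x‖ ≤ c := by
    intro x
    refine norm_iteratedFDeriv_comp_le hPdiff hH (by exact_mod_cast le_top) x ?_ ?_
    · intro i hi
      exact hPder (H x) (hHR x) i hi
    · intro i hi1 hin
      exact hDder i hi1 hin x
  refine ⟨c, hcpos, ?_⟩
  intro ε hε x
  -- rescaling
  set φ : X →L[ℝ] X := ε⁻¹ • ContinuousLinearMap.id ℝ X with hφdef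
  have hφnorm : ‖φ‖ ≤ ε⁻¹ := by
    refine ContinuousLinearMap.opNorm_le_bound _ (by positivity) (fun y => ?_)
    simp [φ, norm_smul, Real.norm_eq_abs, abs_of_pos hε]
  have hfun : (fun y => P (ε • H (ε⁻¹ • y))) = fun y => ε ^ j • ((P ∘ H) ∘ φ) y := by
    funext y
    have : P (ε • H (ε⁻¹ • y)) = ε ^ j • P (H (ε⁻¹ • y)) := by
      rw [hP, hP]
      have := g.map_smul_univ (fun _ : Fin j => ε) (fun _ : Fin j => H (ε⁻¹ • y))
      simpa [Finset.prod_const] using this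
    simp [this, φ, Function.comp]
  have hcompdiff : ContDiff ℝ (⊤ : ℕ∞) ((P ∘ H) ∘ φ) := hFdiff.comp φ.contDiff
  have hstep1 : iteratedFDeriv ℝ n (fun y => P (ε • H (ε⁻¹ • y))) x =
      ε ^ j • iteratedFDeriv ℝ n ((P ∘ H) ∘ φ) x := by
    rw [hfun]
    exact iteratedFDeriv_const_smul_apply' (hcompdiff.contDiffAt.of_le (by exact_mod_cast le_top))
  have hstep2 : iteratedFDeriv ℝ n ((P ∘ H) ∘ φ) x =
      (iteratedFDeriv ℝ n (P ∘ H) (φ x)).compContinuousLinearMap fun _ => φ :=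
    φ.iteratedFDeriv_comp_right hFdiff x (by exact_mod_cast le_top)
  rw [hstep1]
  rw [norm_smul (ε ^ j) (iteratedFDeriv ℝ n ((P ∘ H) ∘ φ) x), hstep2]
  have hnorm2 : ‖(iteratedFDeriv ℝ n (P ∘ H) (φ x)).compContinuousLinearMap fun _ => φ‖ ≤
      c * (ε⁻¹) ^ n := by
    calc ‖(iteratedFDeriv ℝ n (P ∘ H) (φ x)).compContinuousLinearMap fun _ => φ‖
        ≤ ‖iteratedFDeriv ℝ n (P ∘ H) (φ x)‖ * ∏ _k : Fin n, ‖φ‖ :=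
          ContinuousMultilinearMap.norm_compContinuousLinearMap_le _ _
      _ ≤ c * (ε⁻¹) ^ n := by
          apply mul_le_mul (hFbound _)
          · calc (∏ _k : Fin n, ‖φ‖) ≤ ∏ _k : Fin n, ε⁻¹ :=
                Finset.prod_le_prod (fun _ _ => norm_nonneg _) (fun _ _ => hφnorm)
              _ = (ε⁻¹) ^ n := by simp [Finset.prod_const]
          · exact Finset.prod_nonneg (fun _ _ => norm_nonneg _)
          · exact le_of_lt hcpos
  have hεj : ‖ε ^ j‖ = ε ^ j := abs_of_pos (by positivity)
  calc ‖ε ^ j‖ * ‖(iteratedFDeriv ℝ n (P ∘ H) (φ x)).compContinuousLinearMap fun _ => φ‖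
      ≤ ε ^ j * (c * (ε⁻¹) ^ n) := by
        rw [hεj]
        exact mul_le_mul_of_nonneg_left hnorm2 (by positivity)
    _ = ε ^ ((j : ℤ) - (n : ℤ)) * c := by
        rw [zpow_sub₀ (ne_of_gt hε)]
        rw [zpow_natCast, zpow_natCast]
        field_simp
        rw [div_pow, one_pow, div_mul_cancel₀ _ (pow_ne_zero _ (ne_of_gt hε))]
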